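/- For all formulas φ, ψ, θ of L, the formula ◻(φ↔ψ) → (((φ⪰θ)↔(ψ⪰θ)) ∧ ((θ⪰φ)↔(θ⪰ψ))) is valid. -/

import Mathlib

/-- Formulas of the preference language L, generated from sentential
variables by negation, conjunction, and the binary connective ⪰. -/
inductive Fml (α : Type) : Type where
  | var : α → Fml α
  | neg : Fml α → Fml α
  | conj : Fml α → Fml α → Fml α
  | succeq : Fml α → Fml α → Fml α

namespace Fml

variable {α : Type}

/-- φ∨ψ := ¬(¬φ∧¬ψ) -/
def disj (φ ψ : Fml α) : Fml α := neg (conj (neg φ) (neg ψ))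
/-- φ→ψ := ¬φ∨ψ -/
def impl (φ ψ : Fml α) : Fml α := disj (neg φ) ψ
/-- φ↔ψ := (φ→ψ)∧(ψ→φ) -/
def iffF (φ ψ : Fml α) : Fml α := conj (impl φ ψ) (impl ψ φ)
/-- φ≻ψ := (φ⪰ψ)∧¬(ψ⪰φ) -/
def succ (φ ψ : Fml α) : Fml α := conj (succeq φ ψ) (neg (succeq ψ φ))
/-- ⊤ := p→p for a fixed variable p -/
def topF (p : α) : Fml α := impl (var p) (var p)
/-- ⊥ := ¬⊤ -/
def botF (p : α) : Fml α := neg (topF p)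
/-- ◻φ := ¬(¬φ⪰¬φ) -/
def box (φ : Fml α) : Fml α := neg (succeq (neg φ) (neg φ))
/-- ◇φ := φ⪰φ -/
def dia (φ : Fml α) : Fml α := succeq φ φ
/-- Conditional obligation C(φ,ψ) := (φ∧ψ) ≻ (φ∧¬ψ) -/
def Cond (φ ψ : Fml α) : Fml α := succ (conj φ ψ) (conj φ (neg ψ))
/-- Obligation Oψ := C(⊤,ψ), where ⊤ uses the fixed variable p -/
def Ob (p : α) (ψ : Fml α) : Fml α := Cond (topF p) ψ
/-- Permission Pψ := ¬O¬ψ -/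
def Perm (p : α) (ψ : Fml α) : Fml α := neg (Ob p (neg ψ))

end Fml

/-- A model (W,S,U,T): a nonempty set of worlds, a selection function
picking a member of each nonempty set of worlds, a real-valued utility
function, and a truth-assignment. -/
structure Model (α : Type) : Type 1 where
  W : Type
  nonempty : Nonempty W
  S : W → Set W → W
  S_mem : ∀ (w : W) (A : Set W), A.Nonempty → S w A ∈ A
  U : W → ℝ
  T : α → Set W

open Classical in
/-- The proposition ⟦φ⟧_M expressed by φ in the model M. -/
noncomputable def sat {α : Type} (M : Model α) : Fml α → Set M.W
  | .var p => M.T p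
  | .neg θ => (sat M θ)ᶜ
  | .conj θ ψ => sat M θ ∩ sat M ψ
  | .succeq θ ψ =>
      if sat M θ = ∅ ∨ sat M ψ = ∅ then ∅
      else {w | M.U (M.S w (sat M θ)) ≥ M.U (M.S w (sat M ψ))}

/-- φ ⊨ ψ : in every model, ⟦φ⟧ ⊆ ⟦ψ⟧. -/
def Implies {α : Type} (φ ψ : Fml α) : Prop :=
  ∀ M : Model α, sat M φ ⊆ sat M ψ

/-- ⊨ φ : in every model, ⟦φ⟧ = W. -/
def Valid {α : Type} (φ : Fml α) : Prop :=
  ∀ M : Model α, sat M φ = Set.univ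

lemma sat_conj {α : Type} (M : Model α) (a b : Fml α) :
    sat M (Fml.conj a b) = sat M a ∩ sat M b := by
  conv_lhs => rw [sat]

lemma mem_impl {α : Type} (M : Model α) (a b : Fml α) (w : M.W) :
    w ∈ sat M (Fml.impl a b) ↔ (w ∈ sat M a → w ∈ sat M b) := by
  simp only [Fml.impl, Fml.disj, sat, Set.mem_compl_iff, Set.mem_inter_iff,
    compl_compl, not_and_or, not_not]
  tauto

lemma mem_iffF {α : Type} (M : Model α) (a b : Fml α) (w : M.W) :
    w ∈ sat M (Fml.iffF a b) ↔ (w ∈ sat M a ↔ w ∈ sat M b) := by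
  simp only [Fml.iffF, Fml.impl, Fml.disj, sat, Set.mem_inter_iff,
    Set.mem_compl_iff, compl_compl, not_and_or, not_not]
  tauto

theorem stmt_4 {α : Type} [Nonempty α] (φ ψ θ : Fml α) :
    Valid (Fml.impl (Fml.box (Fml.iffF φ ψ))
      (Fml.conj
        (Fml.iffF (Fml.succeq φ θ) (Fml.succeq ψ θ))
        (Fml.iffF (Fml.succeq θ φ) (Fml.succeq θ ψ)))) := by
  intro M
  ext w
  simp only [Set.mem_univ, iff_true]
  rw [mem_impl]
  intro hbox
  -- From the box, derive sat M φ = sat M ψ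
  have hsame : sat M φ = sat M ψ := by
    simp only [Fml.box, sat, Set.mem_compl_iff] at hbox
    by_cases hc : (sat M (Fml.iffF φ ψ))ᶜ = ∅
    · have huniv : sat M (Fml.iffF φ ψ) = Set.univ := by
        rw [← compl_compl (sat M (Fml.iffF φ ψ)), hc, Set.compl_empty]
      ext x
      have hx := (mem_iffF M φ ψ x).1 (huniv ▸ Set.mem_univ x)
      exact hx
    · exfalso
      apply hbox
      simp only [hc, or_self, ↓reduceIte]
      exact Set.mem_setOf.mpr (le_refl _)
  have e1 : sat M (Fml.succeq φ θ) = sat M (Fml.succeq ψ θ) := by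
    conv_lhs => rw [sat]
    conv_rhs => rw [sat]
    rw [hsame]
  have e2 : sat M (Fml.succeq θ φ) = sat M (Fml.succeq θ ψ) := by
    conv_lhs => rw [sat]
    conv_rhs => rw [sat]
    rw [hsame]
  rw [sat_conj, Set.mem_inter_iff, mem_iffF, mem_iffF, e1, e2]
  exact ⟨Iff.rfl, Iff.rfl⟩
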